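/- With the three-quadrant walk model notation, the following identity holds in ℂ[x,x⁻¹][[t]]: −t·x·Hn(x⁻¹) + t·x⁻¹·Hn(x) + x·Hp₋₁(x) − x⁻¹·Hp₋₁(x⁻¹) + 2t·x⁻¹·Hp(x⁻¹) − 2t·x·Hp(x) + (x − x⁻¹)·Y₀ = 0, where for G ∈ ℂ[x,x⁻¹][[t]] the series G(x⁻¹) is obtained by applying the ℂ-algebra involution x ↦ x⁻¹ of Laurent polynomials to each coefficient of G (the paper's separable linear equation obtained from the null vector of the matrix cRBVP). -/

import Mathlib

open LaurentPolynomial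

/-- Number of `n`-step walks from `(0,0)` to `(i,j)` with steps in
`{(1,1), (−1,1), (0,−1)}`, confined to the three-quadrant cone
`C = {(i,j) : 0 ≤ i ∨ 0 ≤ j}` (the paper's model with corner-step weight `p = 1`). -/
def walkCount : ℕ → ℤ → ℤ → ℕ
  | 0, i, j => if i = 0 ∧ j = 0 then 1 else 0
  | n + 1, i, j =>
      if 0 ≤ i ∨ 0 ≤ j then
        walkCount n (i - 1) (j - 1) + walkCount n (i + 1) (j - 1) + walkCount n i (j + 1)
      else 0

/-- `Hp(x) = Σ_{i≥0,n≥0} f(i,0,n)·xⁱ·tⁿ ∈ ℂ[x,x⁻¹][[t]]` (walks ending on the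
nonnegative horizontal axis); since `f(i,0,n) = 0` for `i > n`, the inner sum is
finite. -/
noncomputable def Hp : PowerSeries (LaurentPolynomial ℂ) :=
  PowerSeries.mk fun n =>
    ∑ i ∈ Finset.range (n + 1), LaurentPolynomial.C (walkCount n i 0 : ℂ) * T (i : ℤ)

/-- `Hn(x) = Σ_{i≥1,n≥0} f(−i,0,n)·xⁱ·tⁿ` (walks ending on the negative horizontal
axis). -/
noncomputable def Hn : PowerSeries (LaurentPolynomial ℂ) :=
  PowerSeries.mk fun n =>
    ∑ i ∈ Finset.Icc 1 n, LaurentPolynomial.C (walkCount n (-(i : ℤ)) 0 : ℂ) * T (i : ℤ)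

/-- `Hp₋₁(x) = Σ_{i≥0,n≥0} f(i,−1,n)·xⁱ·tⁿ` (walks ending on the line `j = −1`,
`i ≥ 0`). -/
noncomputable def Hpm1 : PowerSeries (LaurentPolynomial ℂ) :=
  PowerSeries.mk fun n =>
    ∑ i ∈ Finset.range (n + 1), LaurentPolynomial.C (walkCount n i (-1) : ℂ) * T (i : ℤ)

/-- The `ℂ`-algebra involution `x ↦ x⁻¹` of `ℂ[x,x⁻¹]`, applied to each coefficient
of a power series in `t`: `G(x) ↦ G(x⁻¹)`. -/
noncomputable def inv_x :
    PowerSeries (LaurentPolynomial ℂ) →+* PowerSeries (LaurentPolynomial ℂ) :=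
  PowerSeries.map (RingHomClass.toRingHom (LaurentPolynomial.invert (R := ℂ)))

/-- The paper's separable linear equation obtained from the null vector of the matrix
cRBVP of the three-quadrant walk: for `Y₀` the unique series with zero constant term
satisfying the kernel equation `Y₀ = t(x+x⁻¹)Y₀² + t`, the identity
`−t·x·Hn(x⁻¹) + t·x⁻¹·Hn(x) + x·Hp₋₁(x) − x⁻¹·Hp₋₁(x⁻¹) + 2t·x⁻¹·Hp(x⁻¹)
 − 2t·x·Hp(x) + (x − x⁻¹)·Y₀ = 0` holds in `ℂ[x,x⁻¹][[t]]`. -/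
lemma walk_neg (n : ℕ) (i j : ℤ) (hi : i < 0) (hj : j < 0) : walkCount n i j = 0 := by
  cases n with
  | zero => simp [walkCount]; omega
  | succ n => simp [walkCount]; omega

lemma walk_bound (n : ℕ) (i j : ℤ) (h : (n : ℤ) < i ∨ i < -(n : ℤ)) : walkCount n i j = 0 := by
  induction n generalizing i j with
  | zero => simp [walkCount]; omega
  | succ n ih =>
      simp only [walkCount]
      rcases le_or_gt 0 i with h0 | h0
      · rw [if_pos (Or.inl h0), ih _ _ (by omega), ih _ _ (by omega), ih _ _ (by omega)]
      · rcases le_or_gt 0 j with h1 | h1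
        · rw [if_pos (Or.inr h1), ih _ _ (by omega), ih _ _ (by omega), ih _ _ (by omega)]
        · rw [if_neg (by omega)]

lemma walk_rec (n : ℕ) (i j : ℤ) (h : 0 ≤ i ∨ 0 ≤ j) :
    walkCount (n+1) i j
      = walkCount n (i - 1) (j - 1) + walkCount n (i + 1) (j - 1) + walkCount n i (j + 1) := by
  simp [walkCount, h]

def lc (p : LaurentPolynomial ℂ) (k : ℤ) : ℂ := p.coeff k

lemma lc_add (p q : LaurentPolynomial ℂ) (k : ℤ) : lc (p + q) k = lc p k + lc q k :=
  Finsupp.add_apply p.coeff q.coeff k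

lemma lc_sub (p q : LaurentPolynomial ℂ) (k : ℤ) : lc (p - q) k = lc p k - lc q k :=
  Finsupp.sub_apply p.coeff q.coeff k

lemma lc_CT (r : ℂ) (n k : ℤ) : lc (C r * T n) k = if n = k then r else 0 := by
  rw [lc, ← single_eq_C_mul_T, AddMonoidAlgebra.coeff_single, Finsupp.single_apply]

lemma lc_T_mul (n : ℤ) (p : LaurentPolynomial ℂ) (k : ℤ) : lc (T n * p) k = lc p (k - n) := by
  rw [lc, lc]
  have h := AddMonoidAlgebra.coeff_single_mul_add p (1:ℂ) n (k - n)
  rw [one_mul, add_sub_cancel] at h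
  exact h

lemma lc_invert (p : LaurentPolynomial ℂ) (k : ℤ) : lc (invert p) k = lc p (-k) := invert_apply p k

lemma lc_sum {ι : Type*} (s : Finset ι) (g : ι → LaurentPolynomial ℂ) (k : ℤ) :
    lc (∑ i ∈ s, g i) k = ∑ i ∈ s, lc (g i) k := by
  classical
  induction s using Finset.induction with
  | empty => simp [lc]
  | insert _ _ h ih => rw [Finset.sum_insert h, Finset.sum_insert h, lc_add, ih]

lemma lc_ext {p q : LaurentPolynomial ℂ} (h : ∀ k, lc p k = lc q k) : p = q :=
  LaurentPolynomial.ext h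

lemma lc_one (k : ℤ) : lc 1 k = if k = 0 then 1 else 0 := by
  rw [lc, ← single_zero_one_eq_one, AddMonoidAlgebra.coeff_single, Finsupp.single_apply]; aesop

lemma lc_zero (k : ℤ) : lc 0 k = 0 := rfl

noncomputable def row (j : ℤ) (n : ℕ) : LaurentPolynomial ℂ :=
  ∑ i ∈ Finset.Icc (-(n:ℤ)) n, C (walkCount n i j : ℂ) * T i

noncomputable def rowp (j : ℤ) (n : ℕ) : LaurentPolynomial ℂ :=
  ∑ i ∈ Finset.Icc (0:ℤ) n, C (walkCount n i j : ℂ) * T i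

lemma lc_row (j : ℤ) (n : ℕ) (k : ℤ) : lc (row j n) k = (walkCount n k j : ℂ) := by
  rw [row, lc_sum]
  simp_rw [lc_CT]
  rw [Finset.sum_ite_eq' (Finset.Icc (-(n:ℤ)) n) k fun i => (walkCount n i j : ℂ)]
  split_ifs with h
  · rfl
  · rw [Finset.mem_Icc] at h
    rw [walk_bound n k j (by omega)]
    norm_num

lemma lc_rowp (j : ℤ) (n : ℕ) (k : ℤ) :
    lc (rowp j n) k = if 0 ≤ k then (walkCount n k j : ℂ) else 0 := by
  rw [rowp, lc_sum]
  simp_rw [lc_CT]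
  rw [Finset.sum_ite_eq' (Finset.Icc (0:ℤ) n) k fun i => (walkCount n i j : ℂ)]
  simp only [Finset.mem_Icc]
  split_ifs with h1 h2
  · rfl
  · omega
  · rw [walk_bound n k j (by omega)]; norm_num
  · rfl

lemma row_rec (j : ℤ) (hj : 1 ≤ j) (n : ℕ) :
    row j (n+1) = (T 1 + T (-1)) * row (j-1) n + row (j+1) n := by
  apply lc_ext; intro k
  simp only [lc_add, add_mul, lc_T_mul, lc_row]
  rw [walk_rec n k j (Or.inr (by omega))]
  push_cast; ring

lemma row0_rec (n : ℕ) :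
    row 0 (n+1) = (T 1 + T (-1)) * rowp (-1) n + row 1 n := by
  apply lc_ext; intro k
  simp only [lc_add, add_mul, lc_T_mul, lc_row, lc_rowp, sub_neg_eq_add]
  rw [walk_rec n k 0 (Or.inr le_rfl)]
  norm_num
  split_ifs with h1 h2
  · push_cast; ring
  · omega
  · rw [walk_neg n (k-1) (-1) (by omega) (by omega)]; push_cast; ring
  · rw [walk_neg n (k-1) (-1) (by omega) (by omega),
      walk_neg n (k+1) (-1) (by omega) (by omega)]
    push_cast; ring

lemma rowp_rec (j : ℤ) (hj : j ≤ -1) (n : ℕ) :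
    rowp j (n+1) = (T 1 + T (-1)) * rowp (j-1) n
      - C (walkCount n 0 (j-1) : ℂ) * T (-1) + rowp (j+1) n := by
  apply lc_ext; intro k
  simp only [lc_add, lc_sub, add_mul, lc_T_mul, lc_rowp, lc_CT, sub_neg_eq_add]
  rcases le_or_gt 0 k with hk | hk
  · rw [if_pos hk, walk_rec n k j (Or.inl hk)]
    rcases eq_or_lt_of_le hk with h0 | h0
    · rw [← h0]
      rw [if_neg (by omega : ¬ (0:ℤ) ≤ 0 - 1), if_pos (by omega : (0:ℤ) ≤ 0 + 1),
        if_neg (by omega : ¬ (-1:ℤ) = 0), walk_neg n (0-1) (j-1) (by omega) (by omega)]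
      push_cast; ring
    · rw [if_pos (by omega : (0:ℤ) ≤ k - 1), if_pos (by omega : (0:ℤ) ≤ k + 1),
        if_neg (by omega : ¬ (-1:ℤ) = k), if_pos hk]
      push_cast; ring
  · rw [if_neg (by omega : ¬ (0:ℤ) ≤ k)]
    rcases eq_or_lt_of_le (by omega : k ≤ -1) with h0 | h0
    · subst h0
      rw [if_neg (by omega : ¬ (0:ℤ) ≤ -1 - 1), if_pos (by omega : (0:ℤ) ≤ -1 + 1),
        if_pos rfl, if_neg (by omega : ¬ (0:ℤ) ≤ (-1:ℤ))]
      norm_num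
    · rw [if_neg (by omega : ¬ (0:ℤ) ≤ k - 1), if_neg (by omega : ¬ (0:ℤ) ≤ k + 1),
        if_neg (by omega : ¬ (-1:ℤ) = k), if_neg (by omega : ¬ (0:ℤ) ≤ k)]
      ring

noncomputable def Hline (j : ℤ) : PowerSeries (LaurentPolynomial ℂ) := PowerSeries.mk (row j)
noncomputable def Hhalf (j : ℤ) : PowerSeries (LaurentPolynomial ℂ) := PowerSeries.mk (rowp j)
noncomputable def dseq (j : ℤ) : PowerSeries (LaurentPolynomial ℂ) :=
  PowerSeries.mk fun n => C (walkCount n 0 j : ℂ) * T (-1)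
noncomputable def Cs : PowerSeries (LaurentPolynomial ℂ) := PowerSeries.C (T 1 + T (-1))

lemma row_zero (j : ℤ) : row j 0 = C (walkCount 0 0 j : ℂ) := by
  rw [row]
  norm_num

lemma rowp_zero (j : ℤ) : rowp j 0 = C (walkCount 0 0 j : ℂ) := by
  rw [rowp]
  norm_num

lemma Hline_rec (j : ℤ) (hj : 1 ≤ j) :
    Hline j = PowerSeries.X * (Cs * Hline (j-1)) + PowerSeries.X * Hline (j+1) := by
  apply PowerSeries.ext; intro n
  cases n with
  | zero =>
      simp only [map_add, PowerSeries.coeff_zero_X_mul, Hline, PowerSeries.coeff_mk, row_zero]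
      rw [show walkCount 0 0 j = 0 by simp [walkCount]; omega]
      norm_num
  | succ n =>
      simp only [map_add, PowerSeries.coeff_succ_X_mul, Hline, Cs, PowerSeries.coeff_C_mul,
        PowerSeries.coeff_mk, add_mul]
      rw [row_rec j hj n]; ring

lemma Hline0_rec :
    Hline 0 = 1 + PowerSeries.X * (Cs * Hhalf (-1)) + PowerSeries.X * Hline 1 := by
  apply PowerSeries.ext; intro n
  cases n with
  | zero =>
      simp only [map_add, PowerSeries.coeff_zero_X_mul, Hline, PowerSeries.coeff_mk, row_zero,
        PowerSeries.coeff_zero_eq_constantCoeff, map_one]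
      rw [show walkCount 0 0 0 = 1 by simp [walkCount]]
      norm_num
  | succ n =>
      simp only [map_add, PowerSeries.coeff_succ_X_mul, Hline, Hhalf, Cs,
        PowerSeries.coeff_C_mul, PowerSeries.coeff_mk, PowerSeries.coeff_one,
        Nat.succ_ne_zero, if_false]
      rw [zero_add, row0_rec n]
      simp only [map_add, PowerSeries.coeff_C_mul, PowerSeries.coeff_mk, add_mul]

lemma Hhalf_rec (j : ℤ) (hj : j ≤ -1) :
    Hhalf j = PowerSeries.X * (Cs * Hhalf (j-1)) - PowerSeries.X * dseq (j-1)
      + PowerSeries.X * Hhalf (j+1) := by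
  apply PowerSeries.ext; intro n
  cases n with
  | zero =>
      simp only [map_add, map_sub, PowerSeries.coeff_zero_X_mul, Hhalf, PowerSeries.coeff_mk,
        rowp_zero]
      rw [show walkCount 0 0 j = 0 by simp [walkCount]; omega]
      norm_num
  | succ n =>
      simp only [map_add, map_sub, PowerSeries.coeff_succ_X_mul, Hhalf, dseq, Cs,
        PowerSeries.coeff_C_mul, PowerSeries.coeff_mk, add_mul]
      rw [rowp_rec j hj n]; ring

noncomputable def Ct1 : PowerSeries (LaurentPolynomial ℂ) := PowerSeries.C (T 1)
noncomputable def Ctm1 : PowerSeries (LaurentPolynomial ℂ) := PowerSeries.C (T (-1))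

lemma invx_X : inv_x PowerSeries.X = PowerSeries.X := PowerSeries.map_X _

lemma invx_C (a : LaurentPolynomial ℂ) :
    inv_x (PowerSeries.C a) = PowerSeries.C (invert a) := PowerSeries.map_C _ _

lemma invx_Cs : inv_x Cs = Cs := by
  rw [Cs, invx_C, map_add, invert_T, invert_T]
  norm_num [add_comm]

lemma invx_Ct1 : inv_x Ct1 = Ctm1 := by rw [Ct1, invx_C, invert_T]; rfl

lemma invx_Ctm1 : inv_x Ctm1 = Ct1 := by rw [Ctm1, invx_C, invert_T]; norm_num; rfl

lemma invx_invx (φ : PowerSeries (LaurentPolynomial ℂ)) : inv_x (inv_x φ) = φ := by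
  apply PowerSeries.ext; intro n
  rw [inv_x, PowerSeries.coeff_map, PowerSeries.coeff_map]
  exact involutive_invert _

lemma dseq_cancel (j : ℤ) : Ct1 * dseq j = Ctm1 * inv_x (dseq j) := by
  apply PowerSeries.ext; intro n
  simp only [Ct1, Ctm1, inv_x, PowerSeries.coeff_map, dseq, PowerSeries.coeff_mk,
    PowerSeries.coeff_C_mul, map_mul]
  rw [show ((RingHomClass.toRingHom (LaurentPolynomial.invert (R := ℂ)))
      (C (walkCount n 0 j : ℂ)) : LaurentPolynomial ℂ) = C (walkCount n 0 j : ℂ) from invert_C _,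
    show ((RingHomClass.toRingHom (LaurentPolynomial.invert (R := ℂ)))
      (T (-1)) : LaurentPolynomial ℂ) = T 1 by rw [← invert_T]; norm_num]
  rw [mul_comm (C ((walkCount n 0 j : ℂ))) (T (-1)), mul_comm (C ((walkCount n 0 j : ℂ))) (T 1),
    ← mul_assoc, ← mul_assoc, ← T_add, ← T_add]
  norm_num [T_zero]

lemma seq_unique (a b : PowerSeries (LaurentPolynomial ℂ))
    (u v : ℕ → PowerSeries (LaurentPolynomial ℂ))
    (h0 : u 0 = v 0)
    (hu : ∀ m, u (m+1) = PowerSeries.X * (a * u m) + PowerSeries.X * (b * u (m+2)))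
    (hv : ∀ m, v (m+1) = PowerSeries.X * (a * v m) + PowerSeries.X * (b * v (m+2))) :
    ∀ m, u m = v m := by
  have key : ∀ N M, M ≤ N → ∀ m,
      PowerSeries.coeff M (u m) = PowerSeries.coeff M (v m) := by
    intro N
    induction N with
    | zero =>
        intro M hM m
        obtain rfl : M = 0 := by omega
        cases m with
        | zero => rw [h0]
        | succ m =>
            rw [hu, hv]
            simp only [map_add, PowerSeries.coeff_zero_X_mul]
    | succ N ih =>
        intro M hM m
        rcases Nat.lt_or_ge M (N+1) with h | h
        · exact ih M (by omega) m
        · obtain rfl : M = N + 1 := by omega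
          cases m with
          | zero => rw [h0]
          | succ m =>
              rw [hu, hv]
              simp only [map_add, PowerSeries.coeff_succ_X_mul]
              simp only [PowerSeries.coeff_mul]
              congr 1
              · apply Finset.sum_congr rfl
                intro p hp
                rw [Finset.HasAntidiagonal.mem_antidiagonal] at hp
                rw [ih p.2 (by omega) m]
              · apply Finset.sum_congr rfl
                intro p hp
                rw [Finset.HasAntidiagonal.mem_antidiagonal] at hp
                rw [ih p.2 (by omega) (m+2)]
  intro m
  exact PowerSeries.ext fun M => key M M le_rfl m

lemma Hhalf_rec_inv (j : ℤ) (hj : j ≤ -1) :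
    inv_x (Hhalf j) = PowerSeries.X * (Cs * inv_x (Hhalf (j-1)))
      - PowerSeries.X * inv_x (dseq (j-1)) + PowerSeries.X * inv_x (Hhalf (j+1)) := by
  rw [Hhalf_rec j hj, map_add, map_sub, map_mul, map_mul, map_mul, map_mul, invx_X, invx_Cs]

lemma powHline (Y₀ : PowerSeries (LaurentPolynomial ℂ))
    (hY₀ : Y₀ = Cs * PowerSeries.X * Y₀ ^ 2 + PowerSeries.X) (m : ℕ) :
    Hline (m : ℤ) = (Cs * Y₀) ^ m * Hline 0 := by
  refine seq_unique Cs 1 (fun m => Hline (m : ℤ)) (fun m => (Cs * Y₀) ^ m * Hline 0)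
    (by norm_num) ?_ ?_ m
  · intro m
    have h := Hline_rec ((m : ℤ) + 1) (by omega)
    have e1 : ((m : ℤ) + 1) - 1 = (m : ℤ) := by ring
    have e2 : ((m : ℤ) + 1) + 1 = ((m + 2 : ℕ) : ℤ) := by push_cast; ring
    rw [e1, e2] at h
    show Hline (((m+1 : ℕ) : ℤ)) = _
    rw [show ((m + 1 : ℕ) : ℤ) = (m : ℤ) + 1 by push_cast; ring, h, one_mul]
  · intro m
    show (Cs * Y₀) ^ (m+1) * Hline 0 = _
    linear_combination ((Cs * Y₀) ^ m * Hline 0 * Cs) * hY₀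

lemma powS (Y₀ : PowerSeries (LaurentPolynomial ℂ))
    (hY₀ : Y₀ = Cs * PowerSeries.X * Y₀ ^ 2 + PowerSeries.X) (m : ℕ) :
    Ct1 * Hhalf (-(m : ℤ)) - Ctm1 * inv_x (Hhalf (-(m : ℤ)))
      = Y₀ ^ m * (Ct1 * Hhalf 0 - Ctm1 * inv_x (Hhalf 0)) := by
  refine seq_unique 1 Cs
    (fun m => Ct1 * Hhalf (-(m : ℤ)) - Ctm1 * inv_x (Hhalf (-(m : ℤ))))
    (fun m => Y₀ ^ m * (Ct1 * Hhalf 0 - Ctm1 * inv_x (Hhalf 0)))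
    (by norm_num) ?_ ?_ m
  · intro m
    have h := Hhalf_rec (-(m : ℤ) - 1) (by omega)
    have h' := Hhalf_rec_inv (-(m : ℤ) - 1) (by omega)
    have e1 : (-(m : ℤ) - 1) - 1 = -((m + 2 : ℕ) : ℤ) := by push_cast; ring
    have e2 : (-(m : ℤ) - 1) + 1 = -(m : ℤ) := by ring
    rw [e1, e2] at h h'
    have hd := dseq_cancel (-(m : ℤ) - 1 - 1)
    rw [e1] at hd
    show Ct1 * Hhalf (-((m+1 : ℕ) : ℤ)) - Ctm1 * inv_x (Hhalf (-((m+1 : ℕ) : ℤ))) = _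
    rw [show -((m + 1 : ℕ) : ℤ) = -(m : ℤ) - 1 by push_cast; ring, h', h]
    linear_combination (- PowerSeries.X) * hd
  · intro m
    show Y₀ ^ (m+1) * _ = _
    linear_combination (Y₀ ^ m * (Ct1 * Hhalf 0 - Ctm1 * inv_x (Hhalf 0))) * hY₀

lemma sum_Icc_cast (n : ℕ) (g : ℤ → LaurentPolynomial ℂ) :
    ∑ i ∈ Finset.Icc (0:ℤ) (n:ℤ), g i = ∑ i ∈ Finset.range (n+1), g (i : ℤ) := by
  refine Finset.sum_bij' (fun (a : ℤ) _ => a.toNat) (fun (b : ℕ) _ => (b : ℤ)) ?_ ?_ ?_ ?_ ?_ <;>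
      intro a ha <;>
      simp only [Finset.mem_Icc, Finset.mem_range] at * <;>
      first
        | omega
        | (congr 1; omega)

lemma sum_Icc_neg (n : ℕ) (g : ℤ → LaurentPolynomial ℂ) :
    ∑ i ∈ Finset.Icc (-(n:ℤ)) (-1), g i = ∑ i ∈ Finset.Icc 1 n, g (-(i : ℤ)) := by
  refine Finset.sum_bij' (fun (a : ℤ) _ => (-a).toNat) (fun (b : ℕ) _ => -(b : ℤ)) ?_ ?_ ?_ ?_ ?_ <;>
      intro a ha <;>
      simp only [Finset.mem_Icc] at * <;>
      first
        | omega
        | (congr 1; omega)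

lemma Hhalf0_eq : Hhalf 0 = Hp := by
  apply PowerSeries.ext; intro n
  simp only [Hhalf, Hp, PowerSeries.coeff_mk, rowp]
  exact sum_Icc_cast n _

lemma Hhalfm1_eq : Hhalf (-1) = Hpm1 := by
  apply PowerSeries.ext; intro n
  simp only [Hhalf, Hpm1, PowerSeries.coeff_mk, rowp]
  exact sum_Icc_cast n _

lemma Hline0_eq : Hline 0 = Hp + inv_x Hn := by
  apply PowerSeries.ext; intro n
  simp only [Hline, Hp, Hn, inv_x, PowerSeries.coeff_map, PowerSeries.coeff_mk, map_add,
    map_sum, map_mul]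
  rw [row, ← Finset.sum_filter_add_sum_filter_not (Finset.Icc (-(n:ℤ)) n) (fun i => 0 ≤ i)]
  rw [show Finset.filter (fun i => 0 ≤ i) (Finset.Icc (-(n:ℤ)) n) = Finset.Icc (0:ℤ) n by
      apply Finset.ext; intro i; simp only [Finset.mem_filter, Finset.mem_Icc]; omega,
    show Finset.filter (fun i => ¬ 0 ≤ i) (Finset.Icc (-(n:ℤ)) n) = Finset.Icc (-(n:ℤ)) (-1) by
      apply Finset.ext; intro i; simp only [Finset.mem_filter, Finset.mem_Icc]; omega]
  rw [sum_Icc_cast n (fun i => C (walkCount n i 0 : ℂ) * T i),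
    sum_Icc_neg n (fun i => C (walkCount n i 0 : ℂ) * T i)]
  simp only [RingHom.coe_coe, invert_C, invert_T]

theorem stmt_16 (Y₀ : PowerSeries (LaurentPolynomial ℂ))
    (hY₀const : PowerSeries.constantCoeff Y₀ = 0)
    (hY₀ : Y₀ = PowerSeries.C (T 1 + T (-1)) * PowerSeries.X * Y₀ ^ 2 + PowerSeries.X) :
    -(PowerSeries.X * PowerSeries.C (T 1) * inv_x Hn)
      + PowerSeries.X * PowerSeries.C (T (-1)) * Hn
      + PowerSeries.C (T 1) * Hpm1
      - PowerSeries.C (T (-1)) * inv_x Hpm1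
      + 2 * PowerSeries.X * PowerSeries.C (T (-1)) * inv_x Hp
      - 2 * PowerSeries.X * PowerSeries.C (T 1) * Hp
      + PowerSeries.C (T 1 - T (-1)) * Y₀ = 0 := by
  have hY : Y₀ = Cs * PowerSeries.X * Y₀ ^ 2 + PowerSeries.X := by rw [Cs]; exact hY₀
  have hinvY : inv_x Y₀ = Y₀ := by
    have h2 : inv_x Y₀ = Cs * PowerSeries.X * (inv_x Y₀) ^ 2 + PowerSeries.X := by
      conv_lhs => rw [hY]
      rw [map_add, map_mul, map_mul, map_pow, invx_X, invx_Cs]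
    have key : (1 - Cs * PowerSeries.X * (inv_x Y₀ + Y₀)) * (inv_x Y₀ - Y₀) = 0 := by
      linear_combination h2 - hY
    rcases mul_eq_zero.mp key with h | h
    · exfalso
      have hc := congrArg PowerSeries.constantCoeff h
      simp [PowerSeries.constantCoeff_X] at hc
    · exact sub_eq_zero.mp h
  have F : Hp + inv_x Hn = 1 + PowerSeries.X * (Cs * Hpm1)
      + PowerSeries.X * (Cs * (Y₀ * (Hp + inv_x Hn))) := by
    have h0 := Hline0_rec
    have h1 : Hline 1 = Cs * Y₀ * Hline 0 := by
      have h := powHline Y₀ hY 1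
      norm_num at h
      exact h
    rw [h1, Hhalfm1_eq, Hline0_eq] at h0
    linear_combination h0
  have Fb : inv_x Hp + Hn = 1 + PowerSeries.X * (Cs * inv_x Hpm1)
      + PowerSeries.X * (Cs * (Y₀ * (inv_x Hp + Hn))) := by
    have h := congrArg inv_x F
    simp only [map_add, map_mul, map_one, invx_X, invx_Cs, invx_invx, hinvY] at h
    exact h
  have Gr : Ct1 * Hpm1 - Ctm1 * inv_x Hpm1 = Y₀ * (Ct1 * Hp - Ctm1 * inv_x Hp) := by
    have h := powS Y₀ hY 1
    norm_num at h
    rw [show (-1 : ℤ) = (-1 : ℤ) from rfl] at h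
    rw [Hhalf0_eq, Hhalfm1_eq] at h
    exact h
  simp only [Cs, map_add] at F Fb
  simp only [Ct1, Ctm1] at Gr
  rw [map_sub]
  set xh := PowerSeries.C (R := LaurentPolynomial ℂ) (T 1) with hxh
  set xc := PowerSeries.C (R := LaurentPolynomial ℂ) (T (-1)) with hxc
  have hYe : Y₀ = (xh + xc) * PowerSeries.X * Y₀ ^ 2 + PowerSeries.X := by
    rw [hxh, hxc, ← map_add]; exact hY₀
  have main : (1 - PowerSeries.X * (xh + xc) * Y₀) *
      (-(PowerSeries.X * xh * inv_x Hn)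
        + PowerSeries.X * xc * Hn
        + xh * Hpm1
        - xc * inv_x Hpm1
        + 2 * PowerSeries.X * xc * inv_x Hp
        - 2 * PowerSeries.X * xh * Hp
        + (xh - xc) * Y₀) = 0 := by
    linear_combination (- PowerSeries.X * xh) * F + (PowerSeries.X * xc) * Fb
      + (1 - PowerSeries.X * (xh + xc) * Y₀ - PowerSeries.X ^ 2 * (xh + xc)) * Gr
      + (xh * Hp - xc * inv_x Hp + xh - xc) * hYe
  have hKne : (1 - PowerSeries.X * (xh + xc) * Y₀) ≠ 0 := by
    intro h
    have hc := congrArg PowerSeries.constantCoeff h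
    simp [PowerSeries.constantCoeff_X] at hc
  rcases mul_eq_zero.mp main with h | h
  · exact absurd h hKne
  · exact h
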